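/- Let β ∈ (0,1] and ν > 0, and define the weight function Ũ_{1,β,ν}(x) = (1/(β²Γ(ν))) ∫_0^∞ t^{ν/β−2} exp(−t^{1/β} − x/(βt)) dt for x > 0. Then Ũ_{1,β,ν} is nonnegative and solves the Stieltjes moment problem for the Wright-case generalized factorial: for every n ∈ ℕ, ∫_0^∞ x^n Ũ_{1,β,ν}(x) dx = β^n · n! · Γ(βn+ν)/Γ(ν) = [n]_{1,β,ν}!. -/

import Mathlib

open MeasureTheory

/-- The generalized factorial `[n]_{α,β,ν}!`. -/
noncomputable def genFact (α β ν : ℝ) (n : ℕ) : ℝ :=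
  (∏ i ∈ Finset.Icc 1 n, Real.Gamma (β * i + 1) / Real.Gamma (β * i + 1 - α)) *
    (Real.Gamma (β * n + 1 - α + ν) / Real.Gamma (1 - α + ν))

/-- The weight function `Ũ_{1,β,ν}` for the Wright case `α = 1`. -/
noncomputable def wrightWeight (β ν : ℝ) (x : ℝ) : ℝ :=
  (1 / (β ^ 2 * Real.Gamma ν)) *
    ∫ t in Set.Ioi (0 : ℝ), t ^ (ν / β - 2) * Real.exp (-(t ^ (1 / β)) - x / (β * t))

open Set Real in
lemma wright_sect_integrable (n : ℕ) {r : ℝ} (hr : 0 < r) :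
    IntegrableOn (fun x : ℝ => x ^ n * Real.exp (-(r * x))) (Set.Ioi 0) := by
  have h := integrableOn_rpow_mul_exp_neg_mul_rpow (p := 1) (s := n) (b := r)
    (lt_of_lt_of_le neg_one_lt_zero (Nat.cast_nonneg n)) one_pos hr
  refine (h.congr_fun (fun x hx => ?_) measurableSet_Ioi)
  beta_reduce
  rw [Real.rpow_one, Real.rpow_natCast, neg_mul]

open Set Real in
lemma wright_inner_int (n : ℕ) {r : ℝ} (hr : 0 < r) :
    ∫ x in Set.Ioi (0 : ℝ), x ^ n * Real.exp (-(r * x)) =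
      (1 / r) ^ ((n : ℝ) + 1) * Real.Gamma ((n : ℝ) + 1) := by
  rw [← Real.integral_rpow_mul_exp_neg_mul_Ioi (a := (n : ℝ) + 1) (by positivity) hr]
  refine setIntegral_congr_fun measurableSet_Ioi (fun x hx => ?_)
  rw [add_sub_cancel_right, Real.rpow_natCast]

theorem wrightWeight_solves_stieltjes (β ν : ℝ) (hβ0 : 0 < β) (hβ1 : β ≤ 1) (hν : 0 < ν) :
    (∀ x : ℝ, 0 < x → 0 ≤ wrightWeight β ν x) ∧
    ∀ n : ℕ,
      (∫ x in Set.Ioi (0 : ℝ), x ^ n * wrightWeight β ν x) =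
          β ^ n * n.factorial * Real.Gamma (β * n + ν) / Real.Gamma ν ∧
        β ^ n * n.factorial * Real.Gamma (β * n + ν) / Real.Gamma ν = genFact 1 β ν n := by
  have hΓν : 0 < Real.Gamma ν := Real.Gamma_pos_of_pos hν
  have hp1 : (1 : ℝ) ≤ 1 / β := by rw [le_div_iff₀ hβ0]; linarith
  have hp0 : (0 : ℝ) < 1 / β := by positivity
  constructor
  · intro x hx
    unfold wrightWeight
    refine mul_nonneg (by positivity) (setIntegral_nonneg measurableSet_Ioi fun t ht => ?_)
    have ht' : 0 < t := ht
    positivity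
  intro n
  constructor
  · -- the main integral computation
    set q : ℝ := ν / β - 2 + ((n : ℝ) + 1) with hq_def
    have hq : -1 < q := by
      have h1 : 0 < ν / β := by positivity
      have h2 : (0 : ℝ) ≤ n := Nat.cast_nonneg n
      rw [hq_def]; linarith
    set g : ℝ → ℝ → ℝ := fun x t =>
      x ^ n * (t ^ (ν / β - 2) * Real.exp (-(t ^ (1 / β)) - x / (β * t))) with hg_def
    set C : ℝ := Real.Gamma ((n : ℝ) + 1) * β ^ ((n : ℝ) + 1) with hC_def
    -- pointwise decomposition of g for t > 0
    have hdecomp : ∀ t : ℝ, 0 < t → ∀ x : ℝ,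
        g x t = (t ^ (ν / β - 2) * Real.exp (-(t ^ (1 / β)))) *
          (x ^ n * Real.exp (-((β * t)⁻¹ * x))) := by
      intro t ht x
      have hβt : β * t ≠ 0 := by positivity
      rw [hg_def]
      simp only
      rw [show -(t ^ (1 / β)) - x / (β * t)
            = (-(t ^ (1 / β))) + (-((β * t)⁻¹ * x)) by rw [inv_mul_eq_div]; ring,
        Real.exp_add]
      ring
    -- the inner integral in x, for fixed t > 0
    have hxint : ∀ t ∈ Set.Ioi (0 : ℝ),
        (∫ x in Set.Ioi (0 : ℝ), g x t) = C * (t ^ q * Real.exp (-(t ^ (1 / β)))) := by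
      intro t ht
      have ht' : 0 < t := ht
      have hr : 0 < (β * t)⁻¹ := by positivity
      calc (∫ x in Set.Ioi (0 : ℝ), g x t)
          = (t ^ (ν / β - 2) * Real.exp (-(t ^ (1 / β)))) *
              ∫ x in Set.Ioi (0 : ℝ), x ^ n * Real.exp (-((β * t)⁻¹ * x)) := by
            rw [← integral_const_mul]
            exact setIntegral_congr_fun measurableSet_Ioi fun x _ => by
              rw [hdecomp t ht' x]
        _ = (t ^ (ν / β - 2) * Real.exp (-(t ^ (1 / β)))) *
              ((β * t) ^ ((n : ℝ) + 1) * Real.Gamma ((n : ℝ) + 1)) := by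
            rw [wright_inner_int n hr, show (1:ℝ)/(β*t)⁻¹ = β*t by rw [one_div, inv_inv]]
        _ = C * (t ^ q * Real.exp (-(t ^ (1 / β)))) := by
            rw [Real.mul_rpow hβ0.le ht'.le, hC_def, hq_def,
              Real.rpow_add ht' (ν / β - 2) ((n : ℝ) + 1)]
            ring
    -- integrability of g on the product
    have hmeas : AEStronglyMeasurable (Function.uncurry g)
        ((volume.restrict (Set.Ioi (0:ℝ))).prod (volume.restrict (Set.Ioi (0:ℝ)))) := by
      apply Measurable.aestronglyMeasurable
      show Measurable fun p : ℝ × ℝ => p.1 ^ n *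
        (p.2 ^ (ν / β - 2) * Real.exp (-(p.2 ^ (1 / β)) - p.1 / (β * p.2)))
      fun_prop
    have houter : IntegrableOn (fun t : ℝ => t ^ q * Real.exp (-(t ^ (1 / β))))
        (Set.Ioi 0) := integrableOn_rpow_mul_exp_neg_rpow hq hp0
    have hInt : Integrable (Function.uncurry g)
        ((volume.restrict (Set.Ioi (0:ℝ))).prod (volume.restrict (Set.Ioi (0:ℝ)))) := by
      rw [integrable_prod_iff' hmeas]
      constructor
      · filter_upwards [self_mem_ae_restrict measurableSet_Ioi] with t ht
        have ht' : (0 : ℝ) < t := ht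
        have hr : 0 < (β * t)⁻¹ := by positivity
        exact ((wright_sect_integrable n hr).const_mul _).congr
          (ae_of_all _ fun x => (hdecomp t ht' x).symm)
      · refine (houter.const_mul C).congr ?_
        filter_upwards [self_mem_ae_restrict measurableSet_Ioi] with t ht
        have ht' : (0 : ℝ) < t := ht
        rw [← hxint t ht]
        refine setIntegral_congr_fun measurableSet_Ioi fun x hx => ?_
        have hx' : (0 : ℝ) < x := hx
        show g x t = ‖g x t‖
        rw [Real.norm_eq_abs, abs_of_nonneg
          (show 0 ≤ x ^ n * (t ^ (ν / β - 2) * Real.exp (-(t ^ (1 / β)) - x / (β * t)))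
            by positivity)]
    -- now compute
    have key : (∫ x in Set.Ioi (0 : ℝ), x ^ n * wrightWeight β ν x)
        = (1 / (β ^ 2 * Real.Gamma ν)) *
          ∫ x in Set.Ioi (0 : ℝ), ∫ t in Set.Ioi (0 : ℝ), g x t := by
      rw [← integral_const_mul]
      refine setIntegral_congr_fun measurableSet_Ioi fun x _ => ?_
      unfold wrightWeight
      simp only [hg_def]
      rw [integral_const_mul]
      ring
    rw [key, integral_integral_swap hInt,
      setIntegral_congr_fun measurableSet_Ioi hxint, integral_const_mul,
      integral_rpow_mul_exp_neg_rpow hp0 hq, one_div_one_div]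
    have hexp : (q + 1) / (1 / β) = β * n + ν := by
      rw [hq_def]; field_simp; ring
    rw [hexp, hC_def, Real.Gamma_nat_eq_factorial,
      show ((n : ℝ) + 1) = ((n + 1 : ℕ) : ℝ) by push_cast; ring,
      Real.rpow_natCast]
    field_simp
    ring
  · -- algebraic identity with genFact
    unfold genFact
    have hprod : (∏ i ∈ Finset.Icc 1 n,
        Real.Gamma (β * i + 1) / Real.Gamma (β * i + 1 - 1)) = β ^ n * n.factorial := by
      have : ∀ i ∈ Finset.Icc 1 n,
          Real.Gamma (β * i + 1) / Real.Gamma (β * i + 1 - 1) = β * i := by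
        intro i hi
        have hi1 : 1 ≤ i := (Finset.mem_Icc.mp hi).1
        have hβi : (0 : ℝ) < β * i := by
          have : (1 : ℝ) ≤ (i : ℝ) := by exact_mod_cast hi1
          nlinarith
        rw [add_sub_cancel_right, Real.Gamma_add_one (ne_of_gt hβi),
          mul_div_assoc, div_self (ne_of_gt (Real.Gamma_pos_of_pos hβi)), mul_one]
      rw [Finset.prod_congr rfl this, Finset.prod_mul_distrib, Finset.prod_const,
        Nat.card_Icc, Nat.add_sub_cancel, ← Nat.cast_prod, ← Finset.Ico_add_one_right_eq_Icc,
        Finset.prod_Ico_id_eq_factorial]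
    rw [hprod]
    norm_num
    ring
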